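/- P is a semi-invariant of weight det⁻¹ for the coadjoint action of the affine group GL_n ⋉ V: for every invertible n×n matrix g one has P(gAg⁻¹, f·g⁻¹) = det(g)⁻¹·P(A,f), and for every column vector w ∈ k^n one has P(A + wf, f) = P(A,f), where wf denotes the rank-one n×n matrix obtained as the product of the column w and the row f. -/

import Mathlib

open Matrix

/-- `P A f` is the determinant of the `n × n` matrix whose `i`-th row is `f·A^(i-1)`
(rows `f, fA, fA², …, fA^(n-1)`). -/
noncomputable def PP {R : Type*} [CommRing R] {n : ℕ} (A : Matrix (Fin n) (Fin n) R)
    (f : Fin n → R) : R :=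
  Matrix.det (Matrix.of fun i j : Fin n => vecMul f (A ^ (i : ℕ)) j)

lemma vecMul_vecMulVec' {K : Type*} [Field K] {n : ℕ} (v w f : Fin n → K) :
    vecMul v (vecMulVec w f) = (v ⬝ᵥ w) • f := by
  ext j
  simp only [vecMul, dotProduct, vecMulVec_apply, Pi.smul_apply, smul_eq_mul, Finset.sum_mul]
  exact Finset.sum_congr rfl fun x _ => by ring

lemma key_rows {K : Type*} [Field K] {n : ℕ} (A : Matrix (Fin n) (Fin n) K)
    (f w : Fin n → K) (i : ℕ) :
    ∃ c : ℕ → K, vecMul f ((A + vecMulVec w f) ^ i) =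
      vecMul f (A ^ i) + ∑ j ∈ Finset.range i, c j • vecMul f (A ^ j) := by
  induction i with
  | zero => exact ⟨fun _ => 0, by simp⟩
  | succ i ih =>
    obtain ⟨c, hc⟩ := ih
    refine ⟨fun k => if k = 0 then (vecMul f ((A + vecMulVec w f) ^ i)) ⬝ᵥ w
      else c (k - 1), ?_⟩
    have h1 : vecMul f ((A + vecMulVec w f) ^ (i + 1)) =
        vecMul (vecMul f ((A + vecMulVec w f) ^ i)) A +
          ((vecMul f ((A + vecMulVec w f) ^ i)) ⬝ᵥ w) • f := by
      rw [pow_succ, ← vecMul_vecMul, Matrix.vecMul_add, vecMul_vecMulVec']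
    rw [h1, hc, Matrix.add_vecMul]
    have h2 : (∑ j ∈ Finset.range i, c j • vecMul f (A ^ j)) ᵥ* A
        = ∑ j ∈ Finset.range i, c j • vecMul f (A ^ (j + 1)) := by
      rw [show (∑ j ∈ Finset.range i, c j • vecMul f (A ^ j)) ᵥ* A
          = A.vecMulLinear (∑ j ∈ Finset.range i, c j • vecMul f (A ^ j)) from
          (A.vecMulLinear_apply _).symm, map_sum]
      refine Finset.sum_congr rfl fun j _ => ?_
      rw [_root_.map_smul, Matrix.vecMulLinear_apply, vecMul_vecMul, ← pow_succ]
    rw [h2, vecMul_vecMul, ← pow_succ, Finset.sum_range_succ']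
    simp only [Nat.succ_ne_zero, if_false, Nat.add_sub_cancel, if_pos rfl, pow_zero,
      vecMul_one, Nat.add_eq_zero, and_false, ite_false, reduceIte]
    abel

/-- `P` is a semi-invariant of weight `det⁻¹` for the coadjoint action of
the affine group `GL_n ⋉ V`:  `P(gAg⁻¹, f·g⁻¹) = det(g)⁻¹·P(A,f)` for every invertible
`g`, and `P(A + wf, f) = P(A,f)` for every column vector `w`. -/
theorem stmt_10 {K : Type*} [Field K] {n : ℕ} (hn : 1 ≤ n)
    (A : Matrix (Fin n) (Fin n) K) (f : Fin n → K) :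
    (∀ g : GL (Fin n) K,
      PP ((g : Matrix (Fin n) (Fin n) K) * A * ((g⁻¹ : GL (Fin n) K) : Matrix (Fin n) (Fin n) K))
        (vecMul f ((g⁻¹ : GL (Fin n) K) : Matrix (Fin n) (Fin n) K)) =
        ((g : Matrix (Fin n) (Fin n) K).det)⁻¹ * PP A f) ∧
    (∀ w : Fin n → K, PP (A + vecMulVec w f) f = PP A f) := by
  constructor
  · intro g
    set G : Matrix (Fin n) (Fin n) K := (g : Matrix (Fin n) (Fin n) K) with hG
    set Gi : Matrix (Fin n) (Fin n) K := ((g⁻¹ : GL (Fin n) K) : Matrix (Fin n) (Fin n) K)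
      with hGi
    have hGiG : Gi * G = 1 := by
      rw [hG, hGi, ← Units.val_mul, inv_mul_cancel, Units.val_one]
    have hGGi : G * Gi = 1 := by
      rw [hG, hGi, ← Units.val_mul, mul_inv_cancel, Units.val_one]
    have hrow : ∀ i : ℕ, vecMul (vecMul f Gi) ((G * A * Gi) ^ i)
        = vecMul (vecMul f (A ^ i)) Gi := by
      intro i
      induction i with
      | zero => simp
      | succ i ih =>
        rw [pow_succ, ← vecMul_vecMul, ih]
        repeat rw [vecMul_vecMul]
        congr 1
        rw [← Matrix.mul_assoc Gi (G * A) Gi, ← Matrix.mul_assoc Gi G A, hGiG,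
          Matrix.one_mul, ← Matrix.mul_assoc (A ^ i) A Gi, ← pow_succ]
    have hmat : (Matrix.of fun i j : Fin n =>
        vecMul (vecMul f Gi) ((G * A * Gi) ^ (i : ℕ)) j) =
        (Matrix.of fun i j : Fin n => vecMul f (A ^ (i : ℕ)) j) * Gi := by
      ext i j
      rw [Matrix.mul_apply]
      simp only [Matrix.of_apply, hrow]
      simp [vecMul, dotProduct]
    have hdet : G.det * Gi.det = 1 := by
      rw [← Matrix.det_mul, hGGi, Matrix.det_one]
    have hdetGi : Gi.det = G.det⁻¹ := (inv_eq_of_mul_eq_one_right hdet).symm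
    rw [PP, hmat, Matrix.det_mul, hdetGi, PP, mul_comm]
  · intro w
    choose c hc using fun i : Fin n => key_rows A f w (i : ℕ)
    set B : Matrix (Fin n) (Fin n) K :=
      Matrix.of fun i j : Fin n => vecMul f (A ^ (i : ℕ)) j with hB
    set N : Matrix (Fin n) (Fin n) K :=
      Matrix.of fun i j : Fin n => vecMul f ((A + vecMulVec w f) ^ (i : ℕ)) j with hN
    set L : Matrix (Fin n) (Fin n) K :=
      Matrix.of fun i j : Fin n =>
        if i = j then 1 else if (j : ℕ) < (i : ℕ) then c i (j : ℕ) else 0 with hL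
    have hNL : N = L * B := by
      ext i k
      rw [Matrix.mul_apply]
      have step : ∀ j : Fin n, L i j * B j k =
          (if i = j then B i k else 0) +
            (if (j : ℕ) < (i : ℕ) then c i (j : ℕ) * B j k else 0) := by
        intro j
        simp only [hL, Matrix.of_apply]
        by_cases h1 : i = j
        · subst h1
          simp
        · simp only [h1, if_false, zero_add, ite_mul, zero_mul]
      rw [Finset.sum_congr rfl fun j _ => step j, Finset.sum_add_distrib,
        Finset.sum_ite_eq Finset.univ i fun _ => B i k]
      simp only [Finset.mem_univ, if_true]
      have hsum : (∑ j : Fin n, if (j : ℕ) < (i : ℕ) then c i (j : ℕ) * B j k else 0)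
          = ∑ j ∈ Finset.range (i : ℕ), c i j * vecMul f (A ^ j) k := by
        simp only [hB, Matrix.of_apply]
        rw [Fin.sum_univ_eq_sum_range
          (fun m => if m < (i : ℕ) then c i m * vecMul f (A ^ m) k else 0) n]
        rw [← Finset.sum_subset (Finset.range_subset_range.mpr (le_of_lt i.isLt))
          (fun j _ hj => if_neg (by simp only [Finset.mem_range] at hj; omega))]
        exact Finset.sum_congr rfl fun j hj => if_pos (Finset.mem_range.mp hj)
      rw [hsum]
      have hck := congrFun (hc i) k
      simp only [Pi.add_apply, Finset.sum_apply, Pi.smul_apply, smul_eq_mul] at hck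
      rw [hN, Matrix.of_apply, hck, hB, Matrix.of_apply, add_comm]
    have hLtri : L.BlockTriangular OrderDual.toDual := by
      intro i j hij
      have h1 : (i : ℕ) < (j : ℕ) := hij
      simp only [hL, Matrix.of_apply]
      rw [if_neg (Fin.ne_of_val_ne (by omega)), if_neg (by omega)]
    have hdetL : L.det = 1 := by
      rw [Matrix.det_of_lowerTriangular L hLtri]
      apply Finset.prod_eq_one
      intro i _
      simp [hL]
    rw [PP, PP, ← hN, ← hB, hNL, Matrix.det_mul, hdetL, one_mul]
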